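/- Let p be an odd prime and n = p², m = ⌊n/2⌋. Then there exists a tuple (a_1,…,a_m) of rational numbers with Σ_{j=1}^m a_j sin(jπ/n) = 0 but Σ_{j=1}^m a_j ≠ 0 (an improper identity). -/

import Mathlib

lemma sin_sum_roots (p : ℕ) (hp : 2 ≤ p) (θ : ℝ) :
    ∑ k ∈ Finset.range p, Real.sin (θ + k * (2 * Real.pi / p)) = 0 := by
  have hω : IsPrimitiveRoot (Complex.exp (2 * Real.pi * Complex.I / p)) p :=
    Complex.isPrimitiveRoot_exp p (by omega)
  have hgeom : ∑ k ∈ Finset.range p, Complex.exp (2 * Real.pi * Complex.I / p) ^ k = 0 :=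
    hω.geom_sum_eq_zero (by omega)
  have key : ∑ k ∈ Finset.range p, Complex.exp (↑(θ + k * (2 * Real.pi / p)) * Complex.I) = 0 := by
    have : ∀ k ∈ Finset.range p,
        Complex.exp (↑(θ + k * (2 * Real.pi / p)) * Complex.I)
          = Complex.exp (θ * Complex.I) * Complex.exp (2 * Real.pi * Complex.I / p) ^ k := by
      intro k _
      rw [← Complex.exp_nat_mul, ← Complex.exp_add]
      congr 1
      push_cast
      ring
    rw [Finset.sum_congr rfl this, ← Finset.mul_sum, hgeom, mul_zero]
  calc ∑ k ∈ Finset.range p, Real.sin (θ + k * (2 * Real.pi / p))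
      = ∑ k ∈ Finset.range p, (Complex.exp (↑(θ + k * (2 * Real.pi / p)) * Complex.I)).im := by
        refine Finset.sum_congr rfl fun k _ => ?_
        rw [Complex.exp_ofReal_mul_I_im]
    _ = (∑ k ∈ Finset.range p, Complex.exp (↑(θ + k * (2 * Real.pi / p)) * Complex.I)).im := by
        rw [Complex.im_sum]
    _ = 0 := by rw [key]; rfl

lemma sin_fold (n : ℕ) (hn : Odd n) (hn3 : 3 ≤ n) (j : ℕ)
    (h1 : 1 ≤ j) (h2 : j < 2 * n) (h3 : j ≠ n) :
    ∃ a : Fin (n / 2) → ℚ,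
      (∑ i, (a i : ℝ) * Real.sin ((i.1 + 1) * Real.pi / n)) = Real.sin (j * Real.pi / n) ∧
      (∑ i, a i) = (if j < n then 1 else -1) := by
  obtain ⟨w, hw⟩ := hn
  set i0 : ℕ := if j < n then j else j - n with hi0def
  set t : ℕ := if i0 ≤ n / 2 then i0 else n - i0 with htdef
  set s : ℚ := if j < n then 1 else -1 with hsdef
  have hi0 : 1 ≤ i0 ∧ i0 ≤ n - 1 := by
    rw [hi0def]; split <;> omega
  have ht : 1 ≤ t ∧ t ≤ n / 2 := by
    rw [htdef, hi0def]; split <;> split <;> omega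
  have hnR : (n : ℝ) ≠ 0 := by positivity
  have hsin : Real.sin (j * Real.pi / n) = (s : ℝ) * Real.sin (t * Real.pi / n) := by
    rw [hsdef, htdef, hi0def]
    by_cases hjn : j < n
    · simp only [if_pos hjn]
      by_cases hi : j ≤ n / 2
      · simp [hi]
      · simp only [if_neg hi]
        have hc : ((n - j : ℕ) : ℝ) = (n : ℝ) - j := by
          push_cast [Nat.cast_sub hjn.le]; ring
        rw [hc, show ((n : ℝ) - j) * Real.pi / n = Real.pi - j * Real.pi / n by
          field_simp, Real.sin_pi_sub]
        norm_num
    · simp only [if_neg hjn]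
      push_neg at hjn
      have hc0 : ((j - n : ℕ) : ℝ) = (j : ℝ) - n := by
        push_cast [Nat.cast_sub hjn]; ring
      have hkey : Real.sin (j * Real.pi / n) = -Real.sin ((j - n : ℕ) * Real.pi / n) := by
        rw [hc0, show ((j : ℝ) - n) * Real.pi / n = j * Real.pi / n - Real.pi by
          field_simp]
        rw [Real.sin_sub, Real.sin_pi, Real.cos_pi]
        ring
      by_cases hi : j - n ≤ n / 2
      · simp only [if_pos hi]
        rw [hkey]; norm_num
      · simp only [if_neg hi]
        have hjn2 : j - n < n := by omega
        have hc : ((n - (j - n) : ℕ) : ℝ) = (n : ℝ) - ((j - n : ℕ) : ℝ) := by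
          push_cast [Nat.cast_sub hjn2.le]; ring
        rw [hkey, hc, show ((n : ℝ) - ((j - n : ℕ) : ℝ)) * Real.pi / n
            = Real.pi - ((j - n : ℕ) : ℝ) * Real.pi / n by field_simp,
          Real.sin_pi_sub]
        norm_num
  have htlt : t - 1 < n / 2 := by omega
  refine ⟨fun i => if i = ⟨t - 1, htlt⟩ then s else 0, ?_, ?_⟩
  · have hcast : ∀ i : Fin (n / 2),
        (((if i = ⟨t - 1, htlt⟩ then s else 0 : ℚ)) : ℝ)
          = if i = ⟨t - 1, htlt⟩ then (s : ℝ) else 0 := by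
      intro i; split <;> simp
    simp only [hcast, ite_mul, zero_mul]
    rw [Finset.sum_ite_eq' Finset.univ (⟨t - 1, htlt⟩ : Fin (n / 2))]
    simp only [Finset.mem_univ, if_pos]
    rw [hsin]
    have h' : ((t - 1 : ℕ) : ℝ) + 1 = (t : ℝ) := by
      push_cast [Nat.cast_sub ht.1]; ring
    rw [h']
  · simp only []
    rw [Finset.sum_ite_eq' Finset.univ (⟨t - 1, htlt⟩ : Fin (n / 2))]
    simp [hsdef]

lemma count_signs (p : ℕ) (hodd : Odd p) :
    ∑ k ∈ Finset.range p, (if 2 * k < p then (1 : ℚ) else -1) = 1 := by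
  obtain ⟨w, hw⟩ := hodd
  have hstep : ∀ k ∈ Finset.range p,
      (if 2 * k < p then (1 : ℚ) else -1) = (if 2 * k < p then (2 : ℚ) else 0) - 1 := by
    intro k _; split <;> ring
  rw [Finset.sum_congr rfl hstep, Finset.sum_sub_distrib, Finset.sum_ite, Finset.sum_const,
    Finset.sum_const, Finset.sum_const]
  have hfil : (Finset.range p).filter (fun k => 2 * k < p) = Finset.range (w + 1) := by
    ext k; simp only [Finset.mem_filter, Finset.mem_range]; omega
  rw [hfil]
  simp only [Finset.card_range, smul_eq_mul, nsmul_eq_mul, mul_zero, add_zero, mul_one]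
  push_cast [hw]
  ring

/-- For `p` an odd prime and `n = p²`, `m = ⌊n/2⌋`, there is an improper
identity: a tuple `(a_1,…,a_m) ∈ ℚ^m` with `∑_{j=1}^m a_j sin (jπ/n) = 0`
but `∑_{j=1}^m a_j ≠ 0`. -/
theorem improper_identity_prime_sq (p : ℕ) (hp : p.Prime) (hodd : Odd p) :
    ∃ a : Fin (p ^ 2 / 2) → ℚ,
      (∑ j, (a j : ℝ) * Real.sin ((j.1 + 1) * Real.pi / (p ^ 2 : ℕ))) = 0 ∧
      (∑ j, a j) ≠ 0 := by
  have hp2 := hp.two_le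
  have hpne : p ≠ 2 := by rintro rfl; have := Nat.odd_iff.mp hodd; norm_num at this
  have hp3 : 3 ≤ p := by omega
  -- Setup
  have hnodd : Odd (p ^ 2) := hodd.pow
  have hn3 : 3 ≤ p ^ 2 := by nlinarith
  -- per-k data
  have hkdata : ∀ k : Fin p, ∃ a : Fin (p ^ 2 / 2) → ℚ,
      (∑ i, (a i : ℝ) * Real.sin ((i.1 + 1) * Real.pi / (p ^ 2 : ℕ)))
        = Real.sin (((1 + 2 * k.1 * p : ℕ) : ℝ) * Real.pi / (p ^ 2 : ℕ)) ∧
      (∑ i, a i) = (if 1 + 2 * k.1 * p < p ^ 2 then 1 else -1) := by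
    intro k
    have hk := k.2
    refine sin_fold (p ^ 2) hnodd hn3 (1 + 2 * k.1 * p) (by omega) ?_ ?_
    · nlinarith [k.2, hp3]
    · intro heq
      have hd1 : p ∣ 1 + 2 * k.1 * p := heq ▸ dvd_pow_self p (by norm_num)
      have hd2 : p ∣ 2 * k.1 * p := dvd_mul_left p (2 * k.1)
      have hdd : p ∣ 1 := by
        simpa [Nat.add_sub_cancel] using Nat.dvd_sub hd1 hd2
      have := Nat.le_of_dvd one_pos hdd
      omega
  choose A hA1 hA2 using hkdata
  refine ⟨fun i => ∑ k : Fin p, A k i, ?_, ?_⟩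
  · have hswap : (∑ i : Fin (p ^ 2 / 2),
        ((∑ k : Fin p, A k i : ℚ) : ℝ) * Real.sin ((i.1 + 1) * Real.pi / (p ^ 2 : ℕ)))
        = ∑ k : Fin p, ∑ i : Fin (p ^ 2 / 2),
            (A k i : ℝ) * Real.sin ((i.1 + 1) * Real.pi / (p ^ 2 : ℕ)) := by
      rw [Finset.sum_comm]
      refine Finset.sum_congr rfl fun i _ => ?_
      push_cast
      rw [Finset.sum_mul]
    rw [hswap]
    have hang : ∀ k : Fin p,
        ((1 + 2 * k.1 * p : ℕ) : ℝ) * Real.pi / ((p ^ 2 : ℕ) : ℝ)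
          = Real.pi / (p ^ 2 : ℕ) + k.1 * (2 * Real.pi / p) := by
      intro k
      have hpR : (p : ℝ) ≠ 0 := by positivity
      push_cast
      field_simp
    calc ∑ k : Fin p, ∑ i : Fin (p ^ 2 / 2),
            (A k i : ℝ) * Real.sin ((i.1 + 1) * Real.pi / (p ^ 2 : ℕ))
        = ∑ k : Fin p, Real.sin (Real.pi / (p ^ 2 : ℕ) + k.1 * (2 * Real.pi / p)) := by
          refine Finset.sum_congr rfl fun k _ => ?_
          rw [hA1 k, hang k]
      _ = ∑ k ∈ Finset.range p, Real.sin (Real.pi / (p ^ 2 : ℕ) + k * (2 * Real.pi / p)) := by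
          rw [Fin.sum_univ_eq_sum_range
            (fun k : ℕ => Real.sin (Real.pi / ((p ^ 2 : ℕ) : ℝ) + k * (2 * Real.pi / p))) p]
      _ = 0 := sin_sum_roots p (by omega) _
  · rw [Finset.sum_comm]
    have hiff : ∀ k : Fin p, (1 + 2 * k.1 * p < p ^ 2) ↔ 2 * k.1 < p := by
      intro k
      constructor
      · intro h
        have : 2 * k.1 * p < p * p := by nlinarith
        exact Nat.lt_of_mul_lt_mul_right this
      · intro h
        have h1 : 2 * k.1 ≤ p - 1 := by omega
        have : 2 * k.1 * p ≤ (p - 1) * p := Nat.mul_le_mul_right p h1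
        have h2 : (p - 1) * p + p = p ^ 2 := by
          have : p - 1 + 1 = p := by omega
          nlinarith [Nat.sub_add_cancel (by omega : 1 ≤ p)]
        omega
    have : ∀ k : Fin p, (∑ i : Fin (p ^ 2 / 2), A k i) = (if 2 * k.1 < p then (1 : ℚ) else -1) := by
      intro k
      rw [hA2 k]
      simp [hiff k]
    rw [Finset.sum_congr rfl fun k _ => this k, Fin.sum_univ_eq_sum_range
      (fun k => if 2 * k < p then (1 : ℚ) else -1) p, count_signs p hodd]
    norm_num
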